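/- arXiv:1909.03541 — 7 statements merged into one kernel-verified Lean document; each statement's English description precedes it below -/
import Mathlib

section
/- Let $m,n$ be positive integers and $p$ a prime. The polynomial $T(x)=\Phi_{p^m}(\Phi_{2^n}(x))$, the composition of cyclotomic polynomials, is irreducible over $\mathbb{Q}$. -/
open Polynomial

section auxiliary

open IntermediateField


lemma rat_sq_ne_prime {p : ℕ} (hp : p.Prime) (r : ℚ) : r ^ 2 ≠ (p : ℚ) := by
  intro h
  have h1 : ((r : ℝ)) ^ 2 = (p : ℝ) := by exact_mod_cast congrArg (Rat.cast : ℚ → ℝ) h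
  have h2 : ((|r| : ℚ) : ℝ) = Real.sqrt p := by
    rw [← h1, Real.sqrt_sq_eq_abs]; push_cast; rw [abs_eq_abs]; left; rfl
  exact hp.irrational_sqrt ⟨|r|, h2⟩

lemma aux_pow (p : ℕ) (hp : p.Prime) :
    ∀ (k : ℕ) (K : Type) [Field K] [Algebra ℚ K] [FiniteDimensional ℚ K] (a : K),
      (Algebra.norm ℚ a) ^ 2 = (p : ℚ) ^ 2 → Irreducible (X ^ 2 ^ k - C a) := by
  intro k
  induction k with
  | zero => intro K _ _ _ a _; simpa using irreducible_X_sub_C a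
  | succ k IH =>
    intro K _ _ _ a ha
    have hf : Irreducible (X ^ 2 ^ k - C a) := IH K a ha
    have hfm : (X ^ 2 ^ k - C a).Monic := monic_X_pow_sub_C a (pow_ne_zero k two_ne_zero)
    have key : X ^ 2 ^ (k+1) - C a = (X ^ 2 ^ k - C a).comp (X ^ 2) := by
      rw [sub_comp, pow_comp, X_comp, C_comp, ← pow_mul, ← pow_succ']
    rw [key]
    refine Polynomial.irreducible_comp hfm (monic_X_pow 2) hf ?_
    intro E _ _ x hx
    haveI : CharZero K := charZero_of_injective_algebraMap (algebraMap ℚ K).injective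
    haveI : CharZero E := charZero_of_injective_algebraMap (algebraMap K E).injective
    have hxi : IsIntegral K x := ⟨X ^ 2 ^ k - C a, hfm, by
      have := minpoly.aeval K x; rw [hx] at this
      simpa using this⟩
    haveI : FiniteDimensional K K⟮x⟯ := adjoin.finiteDimensional hxi
    haveI : IsScalarTower ℚ K K⟮x⟯ := IsScalarTower.of_algebraMap_eq' (Subsingleton.elim _ _)
    haveI : FiniteDimensional ℚ (↥K⟮x⟯) := Module.Finite.trans (R := ℚ) K (↥K⟮x⟯)
    have hmin : minpoly K (AdjoinSimple.gen K x) = X ^ 2 ^ k - C a := by rw [minpoly_gen, hx]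
    have hnormK : (Algebra.norm K (AdjoinSimple.gen K x)) ^ 2 = a ^ 2 := by
      conv_lhs => rw [← adjoin.powerBasis_gen hxi,
        Algebra.PowerBasis.norm_gen_eq_coeff_zero_minpoly, adjoin.powerBasis_gen hxi]
      rw [hmin]
      have hc : (X ^ 2 ^ k - C a).coeff 0 = -a := by
        simp [coeff_X_pow, (pow_pos (by norm_num : (0:ℕ) < 2) k).ne]
      rw [hc, mul_pow, ← pow_mul, mul_comm _ 2, pow_mul, neg_one_sq, one_pow, one_mul,
        neg_pow, neg_one_sq, one_mul]
    have hmap : (X ^ 2 : K[X]).map (algebraMap K ↥K⟮x⟯) = X ^ 2 := by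
      rw [Polynomial.map_pow, map_X]
    rw [hmap]
    refine X_pow_sub_C_irreducible_of_prime Nat.prime_two ?_
    intro b hb
    have hnb : (Algebra.norm ℚ b) ^ 2 = Algebra.norm ℚ (AdjoinSimple.gen K x) := by
      rw [← map_pow, hb]
    have hsq : ((Algebra.norm ℚ b) ^ 2) ^ 2 = (p : ℚ) ^ 2 := by
      rw [hnb, ← Algebra.norm_norm (R := ℚ) (S := K), ← map_pow, hnormK, map_pow, ha]
    set r : ℚ := Algebra.norm ℚ b
    have h5 : (r ^ 2 - p) * (r ^ 2 + p) = 0 := by linear_combination hsq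
    have hppos : (0 : ℚ) < p := by exact_mod_cast hp.pos
    rcases mul_eq_zero.mp h5 with h6 | h6
    · exact rat_sq_ne_prime hp r (by linarith)
    · nlinarith [sq_nonneg r]

end auxiliary

section main

open IntermediateField

theorem cyclotomic_comp_irreducible (m n p : ℕ) (hm : 0 < m) (hn : 0 < n)
    (hp : p.Prime) :
    Irreducible ((cyclotomic (p ^ m) ℚ).comp (cyclotomic (2 ^ n) ℚ)) := by
  have hpm : 0 < p ^ m := pow_pos hp.pos m
  have hf : Irreducible (cyclotomic (p ^ m) ℚ) := cyclotomic.irreducible_rat hpm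
  refine Polynomial.irreducible_comp (cyclotomic.monic _ _) (cyclotomic.monic _ _) hf ?_
  intro E _ _ x hx
  letI : Algebra ℚ (↥ℚ⟮x⟯) := ℚ⟮x⟯.algebra
  have hxi : IsIntegral ℚ x := ⟨cyclotomic (p ^ m) ℚ, cyclotomic.monic _ _, by
    have := minpoly.aeval ℚ x; rw [hx] at this; exact this⟩
  haveI : FiniteDimensional ℚ (↥ℚ⟮x⟯) := adjoin.finiteDimensional hxi
  obtain ⟨n', rfl⟩ : ∃ n', n = n' + 1 := ⟨n - 1, (Nat.succ_pred_eq_of_pos hn).symm⟩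
  rw [map_cyclotomic, cyclotomic_prime_pow_eq_geom_sum Nat.prime_two,
    show (∑ i ∈ Finset.range 2, ((X : (↥ℚ⟮x⟯)[X]) ^ 2 ^ n') ^ i) - C (AdjoinSimple.gen ℚ x)
      = X ^ 2 ^ n' - C (AdjoinSimple.gen ℚ x - 1) by
      simp only [Finset.sum_range_succ, Finset.sum_range_one, pow_zero, pow_one, map_sub,
        map_one]
      ring]
  have hnormsq : (Algebra.norm ℚ (AdjoinSimple.gen ℚ x - 1)) ^ 2 = (p : ℚ) ^ 2 := by
    -- x is a primitive p^m-th root of unity in E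
    have hroot : (cyclotomic (p ^ m) E).IsRoot x := by
      have h0 := minpoly.aeval ℚ x
      rw [hx] at h0
      rwa [IsRoot.def, ← map_cyclotomic (p ^ m) (algebraMap ℚ E), eval_map, ← aeval_def]
    haveI : NeZero ((p ^ m : ℕ) : E) := ⟨by
      haveI : CharZero E := charZero_of_injective_algebraMap (algebraMap ℚ E).injective
      exact_mod_cast hpm.ne'⟩
    have hprimE : IsPrimitiveRoot x (p ^ m) := isRoot_cyclotomic_iff.mp hroot
    have hgen : ((AdjoinSimple.gen ℚ x : ↥ℚ⟮x⟯) : E) = x := rfl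
    by_cases h2 : p ^ m = 2
    · -- degenerate case : x = -1
      have hp2 : p = 2 := by
        have : p ∣ 2 := h2 ▸ dvd_pow_self p hm.ne'
        exact (Nat.prime_dvd_prime_iff_eq hp Nat.prime_two).mp this
      have hx1 : x = -1 := by
        rw [h2] at hprimE
        exact IsPrimitiveRoot.eq_neg_one_of_two_right hprimE
      have hgen1 : AdjoinSimple.gen ℚ x = -1 := by
        apply Subtype.coe_injective
        show ((AdjoinSimple.gen ℚ x : ↥ℚ⟮x⟯) : E) = ((-1 : ↥ℚ⟮x⟯) : E)
        rw [hgen, hx1]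
        push_cast
        ring
      have hrw2 : (AdjoinSimple.gen ℚ x - 1 : ↥ℚ⟮x⟯) = algebraMap ℚ (↥ℚ⟮x⟯) (-2) := by
        rw [hgen1]; push_cast; norm_num
      rw [hrw2, Algebra.norm_algebraMap, adjoin.finrank hxi, hx, h2, natDegree_cyclotomic,
        Nat.totient_two, hp2]
      norm_num
    · -- main case : cyclotomic extension
      set q : ℕ+ := ⟨p ^ m, hpm⟩ with hq
      have hq2 : q ≠ 2 := by
        intro h; exact h2 (by simpa [hq] using congrArg PNat.val h)
      have hprimE' : IsPrimitiveRoot x (q : ℕ) := hprimE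
      have hprimgen : IsPrimitiveRoot (AdjoinSimple.gen ℚ x) (q : ℕ) :=
        IsPrimitiveRoot.coe_submonoidClass_iff.mp hprimE'
      haveI : IsCyclotomicExtension {(q : ℕ)} ℚ (↥ℚ⟮x⟯) := by
        have H := adjoin_simple_toSubalgebra_of_isAlgebraic hxi.isAlgebraic
        haveI := hprimE'.adjoin_isCyclotomicExtension ℚ
        exact IsCyclotomicExtension.equiv {(q : ℕ)} ℚ _ ((Subalgebra.equivOfEq _ _ H).symm)
      have hnorm : Algebra.norm ℚ (AdjoinSimple.gen ℚ x - 1) = ((q : ℕ).minFac : ℚ) :=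
        hprimgen.sub_one_norm_isPrimePow (by exact hp.prime.isPrimePow.pow hm.ne')
          (by exact_mod_cast hf) h2
      rw [hnorm]
      have : (q : ℕ).minFac = p := hp.pow_minFac hm.ne'
      rw [this]
  exact aux_pow p hp n' (↥ℚ⟮x⟯) _ hnormsq

end main
end

section
/- Let $m,n$ be positive integers with $n\ge 2$ and $p$ a prime. Then $T(x)=\Phi_{p^m}(\Phi_{2^n}(x))$ is $p$-Eisenstein: its leading coefficient is a unit mod $p$, all other coefficients are divisible by $p$, and the constant term equals $p$ (hence is not divisible by $p^2$). -/
open Polynomial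

lemma cyclotomic_zmod_prime_pow (p k : ℕ) [Fact p.Prime] :
    cyclotomic (p ^ (k + 1)) (ZMod p) = (X - 1) ^ (p ^ (k + 1) - p ^ k) := by
  have hp := Fact.out (p := p.Prime)
  have h := cyclotomic_prime_pow_mul_X_pow_sub_one (ZMod p) p k
  have hc : ((X : (ZMod p)[X]) - 1) ^ p ^ k = X ^ p ^ k - 1 := by
    rw [sub_pow_char_pow]; simp
  have hle : p ^ k ≤ p ^ (k + 1) := Nat.pow_le_pow_right hp.pos (Nat.le_succ k)
  have hne : ((X : (ZMod p)[X]) - 1) ^ p ^ k ≠ 0 :=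
    pow_ne_zero _ (X_sub_C_ne_zero (1 : ZMod p))
  have h2 : cyclotomic (p ^ (k + 1)) (ZMod p) * (X - 1) ^ p ^ k
      = (X - 1) ^ (p ^ (k + 1) - p ^ k) * (X - 1) ^ p ^ k := by
    rw [hc, h, ← hc, ← pow_add, Nat.sub_add_cancel hle, sub_pow_char_pow]; simp
  exact mul_right_cancel₀ hne h2

theorem cyclotomic_comp_isEisensteinAt (m n p : ℕ) (hm : 0 < m) (hn : 2 ≤ n)
    (hp : p.Prime) :
    ((cyclotomic (p ^ m) ℤ).comp (cyclotomic (2 ^ n) ℤ)).IsEisensteinAt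
      (Ideal.span {(p : ℤ)}) ∧
    ((cyclotomic (p ^ m) ℤ).comp (cyclotomic (2 ^ n) ℤ)).coeff 0 = p := by
  haveI : Fact p.Prime := ⟨hp⟩
  haveI : Fact (Nat.Prime 2) := ⟨Nat.prime_two⟩
  obtain ⟨k, rfl⟩ : ∃ k, m = k + 1 := ⟨m - 1, (Nat.succ_pred_eq_of_pos hm).symm⟩
  obtain ⟨l, rfl⟩ : ∃ l, n = l + 1 := ⟨n - 1, (Nat.succ_pred_eq_of_pos (by omega)).symm⟩
  set f := (cyclotomic (p ^ (k + 1)) ℤ).comp (cyclotomic (2 ^ (l + 1)) ℤ) with hf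
  set N := 2 ^ l * (p ^ (k + 1) - p ^ k) with hN
  -- cyclotomic 2^(l+1) over ZMod p
  have h2 : cyclotomic (2 ^ (l + 1)) (ZMod p) = X ^ 2 ^ l + 1 := by
    rw [cyclotomic_prime_pow_eq_geom_sum Nat.prime_two]
    rw [Finset.sum_range_succ, Finset.sum_range_one]
    ring
  have hmap : f.map (Int.castRingHom (ZMod p)) = X ^ N := by
    rw [hf, Polynomial.map_comp, map_cyclotomic, map_cyclotomic,
      cyclotomic_zmod_prime_pow, h2, pow_comp, sub_comp, X_comp, one_comp,
      add_sub_cancel_right, ← pow_mul, hN]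
  have hmonic : f.Monic := by
    apply (cyclotomic.monic _ ℤ).comp (cyclotomic.monic _ ℤ)
    rw [natDegree_cyclotomic]
    exact (Nat.totient_pos.mpr (by positivity)).ne'
  have hdeg : f.natDegree = N := by
    have := hmonic.natDegree_map (Int.castRingHom (ZMod p))
    rw [hmap, natDegree_X_pow] at this
    exact this.symm
  have hc0 : f.coeff 0 = p := by
    rw [coeff_zero_eq_eval_zero, hf, eval_comp, ← coeff_zero_eq_eval_zero,
      cyclotomic_coeff_zero _ (by have := Nat.one_lt_two_pow_iff (n := l + 1); omega),
      eval_one_cyclotomic_prime_pow]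
  refine ⟨⟨?_, ?_, ?_⟩, hc0⟩
  · rw [hmonic.leadingCoeff, Ideal.mem_span_singleton]
    intro h
    have h1 : p ∣ 1 := by exact_mod_cast h
    have := Nat.le_of_dvd one_pos h1
    have := hp.two_le
    omega
  · intro i hi
    rw [Ideal.mem_span_singleton]
    have : (f.coeff i : ZMod p) = 0 := by
      have := congrArg (fun q => Polynomial.coeff q i) hmap
      simpa [coeff_X_pow, (hdeg ▸ hi).ne] using this
    exact_mod_cast (ZMod.intCast_zmod_eq_zero_iff_dvd _ _).mp this
  · rw [hc0, Ideal.span_singleton_pow, Ideal.mem_span_singleton]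
    intro h
    have h1 : p ^ 2 ∣ p := by exact_mod_cast h
    have := Nat.le_of_dvd hp.pos h1
    have := hp.two_le
    nlinarith
end

section
/- Let $0<m<n$ be integers. The resultant $R(\Phi_m,\Phi_n)$ equals $p^{\phi(m)}$ if $n/m$ is a power $p^a$ ($a\ge 1$) of a prime $p$, and equals $1$ otherwise. -/
open Polynomial

/-- The resultant of two polynomials `f, g ∈ ℚ[x]`, computed in `ℂ` as
`R(f,g) = a^{deg g} ∏_{f(r)=0} g(r)` where `a` is the leading coefficient of `f`. -/
noncomputable def res (f g : Polynomial ℚ) : ℂ :=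
  (f.leadingCoeff : ℂ) ^ g.natDegree * ((f.aroots ℂ).map (fun r => aeval r g)).prod

namespace ResCyclo

open Finset

/-- Product over a finite group pulled back along a surjective hom. -/
lemma prod_comp_surj {G H M : Type*} [Group G] [Group H] [Fintype G] [Fintype H]
    [DecidableEq H] [CommMonoid M] (π : G →* H) (hπ : Function.Surjective π) (F : H → M) :
    ∃ c : ℕ, c * Fintype.card H = Fintype.card G ∧
      ∏ g : G, F (π g) = (∏ h : H, F h) ^ c := by
  classical
  set c := (Finset.filter (fun g : G => π g = 1) Finset.univ).card with hc
  have h1 : ∀ h : H, (Finset.filter (fun g : G => π g = h) Finset.univ).card = c := by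
    intro h
    exact MonoidHom.card_fiber_eq_of_mem_range π (Set.mem_range.2 (hπ h)) ⟨1, map_one π⟩
  refine ⟨c, ?_, ?_⟩
  · have := Finset.card_eq_sum_card_fiberwise
      (f := fun g : G => π g) (s := Finset.univ) (t := Finset.univ)
      (fun g _ => Finset.mem_univ (π g))
    have h2 : Fintype.card G = ∑ _h : H, c := by
      rw [Fintype.card, this]
      exact Finset.sum_congr rfl fun h _ => h1 h
    rw [h2, Finset.sum_const, smul_eq_mul, Fintype.card, mul_comm]
  · rw [← Finset.prod_fiberwise_of_maps_to (fun g _ => Finset.mem_univ (π g))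
      (fun g => F (π g))]
    rw [← Finset.prod_pow]
    refine Finset.prod_congr rfl fun h _ => ?_
    have : ∀ g ∈ Finset.filter (fun g : G => π g = h) Finset.univ, F (π g) = F h := by
      intro g hg
      rw [(Finset.mem_filter.1 hg).2]
    rw [Finset.prod_congr rfl this, Finset.prod_const, h1]

/-- Reindex a product over primitive `n`-th roots by `(ZMod n)ˣ`. -/
lemma prod_primitiveRoots {M : Type*} [CommMonoid M] {n : ℕ} [NeZero n] {ζ : ℂ}
    (h : IsPrimitiveRoot ζ n) (f : ℂ → M) :
    ∏ x ∈ primitiveRoots n ℂ, f x = ∏ u : (ZMod n)ˣ, f (ζ ^ (u : ZMod n).val) := by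
  have hn : 0 < n := Nat.pos_of_ne_zero (NeZero.ne n)
  symm
  refine Finset.prod_nbij (fun u : (ZMod n)ˣ => ζ ^ (u : ZMod n).val) ?_ ?_ ?_ ?_
  · intro u _
    rw [mem_primitiveRoots hn]
    exact h.pow_of_coprime _ (ZMod.val_coe_unit_coprime u)
  · intro u _ v _ huv
    have := h.pow_inj (ZMod.val_lt _) (ZMod.val_lt _) huv
    exact Units.ext (ZMod.val_injective n this)
  · intro ξ hξ
    simp only [Finset.coe_univ, Set.mem_univ, Set.mem_image, Finset.mem_coe] at *
    rw [mem_primitiveRoots hn, h.isPrimitiveRoot_iff] at hξ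
    obtain ⟨i, hin, hi, rfl⟩ := hξ
    refine ⟨ZMod.unitOfCoprime i hi, trivial, ?_⟩
    simp [ZMod.coe_unitOfCoprime, ZMod.val_natCast, Nat.mod_eq_of_lt hin]
  · intro u _; rfl

lemma eval_cyclotomic_prod {k : ℕ} (hk : 0 < k) (x : ℂ) :
    eval x (cyclotomic k ℂ) = ∏ ρ ∈ primitiveRoots k ℂ, (x - ρ) := by
  rw [cyclotomic_eq_prod_X_sub_primitiveRoots (Complex.isPrimitiveRoot_exp k hk.ne'),
    eval_prod]
  simp

/-- The key product `∏_{η primitive n-th root} (η^m - 1)`. -/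
lemma prod_pow_sub_one {n m : ℕ} (hn : 0 < n) (hm : 0 < m) :
    ∏ η ∈ primitiveRoots n ℂ, (η ^ m - 1) =
      (-1) ^ n.totient *
        (eval 1 (cyclotomic (n / n.gcd m) ℂ)) ^ (n.totient / (n / n.gcd m).totient) := by
  haveI : NeZero n := ⟨hn.ne'⟩
  set g := n.gcd m with hg
  have hgdvd : g ∣ n := Nat.gcd_dvd_left n m
  set n' := n / g with hn'
  have hn'dvd : n' ∣ n := Nat.div_dvd_of_dvd hgdvd
  have hn'pos : 0 < n' := Nat.div_pos (Nat.le_of_dvd hn hgdvd)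
    (Nat.gcd_pos_of_pos_left m hn)
  haveI : NeZero n' := ⟨hn'pos.ne'⟩
  obtain ⟨ζ, hζ⟩ : ∃ ζ : ℂ, IsPrimitiveRoot ζ n := ⟨_, Complex.isPrimitiveRoot_exp n hn.ne'⟩
  set ψ := ζ ^ m with hψdef
  have hψ : IsPrimitiveRoot ψ n' := by
    have := orderOf_pow' ζ (n := m) hm.ne'
    rw [← hζ.eq_orderOf] at this
    have h2 : orderOf ψ = n' := this
    rw [← h2]
    exact IsPrimitiveRoot.orderOf ψ
  set π := ZMod.unitsMap hn'dvd with hπ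
  have hπs : Function.Surjective π := ZMod.unitsMap_surjective hn'dvd
  obtain ⟨c, hc, hprod⟩ := prod_comp_surj π hπs (fun v : (ZMod n')ˣ => ψ ^ (v : ZMod n').val - 1)
  have key : ∀ u : (ZMod n)ˣ, (ζ ^ (u : ZMod n).val) ^ m - 1
      = ψ ^ ((π u : ZMod n').val) - 1 := by
    intro u
    have h1 : (ζ ^ (u : ZMod n).val) ^ m = ψ ^ (u : ZMod n).val := by
      rw [← pow_mul, ← pow_mul, mul_comm]
    have h2 : ((π u : ZMod n').val) = (u : ZMod n).val % n' := by
      rw [hπ, ZMod.unitsMap]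
      simp only [Units.coe_map, MonoidHom.coe_coe, ZMod.castHom_apply]
      rw [← ZMod.natCast_val, ZMod.val_natCast]
    have h3 : ψ ^ ((u : ZMod n).val % n') = ψ ^ (u : ZMod n).val := by
      conv_rhs => rw [← Nat.div_add_mod ((u : ZMod n).val) n']
      rw [pow_add, pow_mul, hψ.pow_eq_one, one_pow, one_mul]
    rw [h1, h2, h3]
  have e1 : ∏ η ∈ primitiveRoots n ℂ, (η ^ m - 1)
      = ∏ u : (ZMod n)ˣ, (ψ ^ ((π u : ZMod n').val) - 1) := by
    rw [prod_primitiveRoots hζ (fun x => x ^ m - 1)]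
    exact Finset.prod_congr rfl fun u _ => key u
  have e2 : ∏ v : (ZMod n')ˣ, (ψ ^ (v : ZMod n').val - 1)
      = ∏ ξ ∈ primitiveRoots n' ℂ, (ξ - 1) := by
    rw [prod_primitiveRoots hψ (fun x => x - 1)]
  have e3 : ∏ ξ ∈ primitiveRoots n' ℂ, (ξ - 1)
      = (-1) ^ n'.totient * eval 1 (cyclotomic n' ℂ) := by
    rw [eval_cyclotomic_prod hn'pos]
    rw [← Complex.card_primitiveRoots n', ← Finset.prod_const, ← Finset.prod_mul_distrib]
    exact Finset.prod_congr rfl fun ξ _ => by ring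
  have hcard : c * n'.totient = n.totient := by
    rw [← ZMod.card_units_eq_totient n, ← ZMod.card_units_eq_totient n']
    exact hc
  have hceq : c = n.totient / n'.totient := by
    rw [← hcard, Nat.mul_div_cancel _ (Nat.totient_pos.2 hn'pos)]
  have hcard' : n'.totient * c = n.totient := by rw [mul_comm]; exact hcard
  rw [e1, hprod, e2, e3, mul_pow, ← pow_mul, hcard', hceq]

/-- `∏_{d ∣ m} (∏_{η ∈ P_n} Φ_d(η)) = ∏_{η ∈ P_n} (η^m - 1)`. -/
lemma prod_divisors_eval {n m : ℕ} (hm : 0 < m) :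
    ∏ d ∈ m.divisors, ∏ η ∈ primitiveRoots n ℂ, eval η (cyclotomic d ℂ)
      = ∏ η ∈ primitiveRoots n ℂ, (η ^ m - 1) := by
  rw [Finset.prod_comm]
  refine Finset.prod_congr rfl fun η _ => ?_
  have := prod_cyclotomic_eq_X_pow_sub_one hm ℂ
  have h2 := congrArg (eval η) this
  rw [eval_prod] at h2
  rw [h2, eval_sub, eval_pow, eval_X, eval_one]

/-- Dichotomy for `Φ_k(1)`. -/
lemma eval_one_dichotomy {k : ℕ} (hk : 1 < k) :
    (∃ p a : ℕ, p.Prime ∧ 1 ≤ a ∧ k = p ^ a ∧ eval 1 (cyclotomic k ℂ) = p) ∨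
    ((¬ ∃ p a : ℕ, p.Prime ∧ 1 ≤ a ∧ k = p ^ a) ∧ eval 1 (cyclotomic k ℂ) = 1) := by
  by_cases h : ∃ p a : ℕ, p.Prime ∧ 1 ≤ a ∧ k = p ^ a
  · obtain ⟨p, a, hp, ha, rfl⟩ := h
    obtain ⟨b, rfl⟩ := Nat.exists_eq_add_of_le ha
    haveI : Fact p.Prime := ⟨hp⟩
    refine Or.inl ⟨p, 1 + b, hp, by omega, rfl, ?_⟩
    rw [add_comm 1 b]
    exact eval_one_cyclotomic_prime_pow b
  · refine Or.inr ⟨h, ?_⟩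
    refine eval_one_cyclotomic_not_prime_pow ?_
    intro p hp a hpa
    rcases Nat.eq_zero_or_pos a with rfl | ha
    · simp at hpa; omega
    · exact h ⟨p, a, hp, ha, hpa.symm⟩

lemma eval_one_ne_zero {k : ℕ} (hk : 1 < k) : eval 1 (cyclotomic k ℂ) ≠ 0 := by
  rcases eval_one_dichotomy hk with ⟨p, a, hp, _, _, hv⟩ | ⟨_, hv⟩
  · rw [hv]
    exact_mod_cast Nat.cast_ne_zero.2 hp.pos.ne'
  · rw [hv]; exact one_ne_zero

/-- The conjectured value of `∏_{η ∈ P_n} Φ_m(η)` for `m < n`. -/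
noncomputable def sval (n m : ℕ) : ℂ :=
  if m ∣ n then (eval 1 (cyclotomic (n / m) ℂ)) ^ m.totient else 1

lemma sval_ne_zero {n m : ℕ} (hm : 0 < m) (hmn : m < n) : sval n m ≠ 0 := by
  rw [sval]
  split_ifs with h
  · refine pow_ne_zero _ (eval_one_ne_zero ?_)
    exact Nat.lt_of_mul_lt_mul_left (a := m) (by
      rw [Nat.mul_div_cancel' h, mul_one]; exact hmn)
  · exact one_ne_zero

/-- Auxiliary: div juggling. -/
lemma div_div_eq {n g d : ℕ} (hg : g ∣ n) (hd : d ∣ g) (hgpos : 0 < g) :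
    n / (g / d) = (n / g) * d := by
  have hd0 : 0 < d := Nat.pos_of_dvd_of_pos hd hgpos
  have h1 : g / d ∣ n := (Nat.div_dvd_of_dvd hd).trans hg
  have h2 : 0 < g / d := Nat.div_pos (Nat.le_of_dvd hgpos hd) hd0
  rw [Nat.div_eq_iff_eq_mul_left h2 h1, mul_assoc, Nat.mul_div_cancel' hd,
    Nat.div_mul_cancel hg]

lemma not_prime_pow_aux {k : ℕ} (hk : 1 < k) (hpp : ¬ IsPrimePow k) :
    ∀ {p : ℕ}, p.Prime → ∀ a : ℕ, p ^ a ≠ k := by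
  intro p hp a hpa
  rcases Nat.eq_zero_or_pos a with rfl | ha
  · simp at hpa; omega
  · exact hpp ((isPrimePow_nat_iff k).2 ⟨p, a, hp, ha, hpa⟩)

/-- The combinatorial identity. -/
lemma prod_sval {n m : ℕ} (hn : 0 < n) (hm : 0 < m) (hnm : ¬ n ∣ m) :
    ∏ d ∈ m.divisors, sval n d
      = (eval 1 (cyclotomic (n / n.gcd m) ℂ)) ^ (n.totient / (n / n.gcd m).totient) := by
  classical
  set g := n.gcd m with hg
  have hgdvd : g ∣ n := Nat.gcd_dvd_left n m
  have hgm : g ∣ m := Nat.gcd_dvd_right n m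
  have hgpos : 0 < g := Nat.gcd_pos_of_pos_left m hn
  set n' := n / g with hn'
  have hn'pos : 0 < n' := Nat.div_pos (Nat.le_of_dvd hn hgdvd) hgpos
  have hnn' : n = n' * g := by rw [hn', Nat.div_mul_cancel hgdvd]
  have hn'1 : 1 < n' := by
    rcases Nat.lt_or_ge 1 n' with h | h
    · exact h
    · exfalso
      have : n' = 1 := by omega
      exact hnm (by rw [hnn', this, one_mul]; exact hgm)
  -- Step 1: restrict the product to divisors of `g`
  have hfilt : Finset.filter (· ∣ n) m.divisors = g.divisors := by
    ext d
    simp only [Finset.mem_filter, Nat.mem_divisors]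
    constructor
    · rintro ⟨⟨hdm, _⟩, hdn⟩
      exact ⟨Nat.dvd_gcd hdn hdm, hgpos.ne'⟩
    · rintro ⟨hdg, _⟩
      exact ⟨⟨hdg.trans hgm, hm.ne'⟩, hdg.trans hgdvd⟩
  have step1 : ∏ d ∈ m.divisors, sval n d
      = ∏ d ∈ g.divisors, (eval 1 (cyclotomic (n / d) ℂ)) ^ d.totient := by
    rw [← hfilt, Finset.prod_filter]
    exact Finset.prod_congr rfl fun d _ => by rw [sval]
  -- Step 2: reindex `d ↦ g / d`
  have step2 : ∏ d ∈ g.divisors, (eval 1 (cyclotomic (n / d) ℂ)) ^ d.totient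
      = ∏ d ∈ g.divisors, (eval 1 (cyclotomic (n' * d) ℂ)) ^ (g / d).totient := by
    conv_lhs => rw [← Nat.prod_div_divisors g
      (fun d => (eval 1 (cyclotomic (n / d) ℂ)) ^ d.totient)]
    refine Finset.prod_congr rfl fun d hd => ?_
    have hdg : d ∣ g := (Nat.mem_divisors.1 hd).1
    rw [div_div_eq hgdvd hdg hgpos]
  rw [step1, step2]
  by_cases hpp : IsPrimePow n'
  · -- `n' = p ^ (b + 1)`
    obtain ⟨p, b, hp, hb, hpb⟩ := (isPrimePow_nat_iff n').1 hpp
    have hp' : p.Prime := hp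
    haveI : Fact p.Prime := ⟨hp'⟩
    obtain ⟨b', rfl⟩ : ∃ b', b = b' + 1 := ⟨b - 1, by omega⟩
    set v := g.factorization p with hv
    set u := g / p ^ v with hu
    have hgu : p ^ v * u = g := Nat.ordProj_mul_ordCompl_eq_self g p
    have hpu : p.Coprime u := Nat.coprime_ordCompl hp' hgpos.ne'
    have hpvg : p ^ v ∣ g := Nat.ordProj_dvd g p
    have hpvpos : 0 < p ^ v := pow_pos hp'.pos v
    -- each factor
    have hsplit : ∀ d ∈ g.divisors, (eval 1 (cyclotomic (n' * d) ℂ)) ^ (g / d).totient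
        = if d ∣ p ^ v then (p : ℂ) ^ (g / d).totient else 1 := by
      intro d hd
      have hdg : d ∣ g := (Nat.mem_divisors.1 hd).1
      by_cases hdp : d ∣ p ^ v
      · obtain ⟨i, hib, rfl⟩ := (Nat.dvd_prime_pow hp').1 hdp
        rw [if_pos hdp]
        have hpow : n' * p ^ i = p ^ ((b' + i) + 1) := by
          rw [← hpb, ← pow_add]
          ring_nf
        rw [hpow, eval_one_cyclotomic_prime_pow]
      · rw [if_neg hdp]
        have hev : eval 1 (cyclotomic (n' * d) ℂ) = 1 := by
          refine eval_one_cyclotomic_not_prime_pow ?_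
          intro q hq k hqk
          have hpq : p = q := by
            have h1 : p ∣ q ^ k := by
              refine dvd_trans ?_ (dvd_of_eq hqk.symm)
              exact Dvd.dvd.mul_right (dvd_trans (dvd_pow_self p (by omega)) 
                (dvd_of_eq hpb)) d
            exact ((Nat.prime_dvd_prime_iff_eq hp' hq).1 (hp'.dvd_of_dvd_pow h1))
          subst hpq
          have hdk : d ∣ p ^ k := Dvd.dvd.mul_left (dvd_refl d) n' |>.trans (dvd_of_eq hqk.symm)
          obtain ⟨i, hik, rfl⟩ := (Nat.dvd_prime_pow hp').1 hdk
          have : i ≤ v := (hp'.pow_dvd_iff_le_factorization hgpos.ne').1 hdg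
          exact hdp (pow_dvd_pow p this)
        rw [hev, one_pow]
    rw [Finset.prod_congr rfl hsplit, ← Finset.prod_filter]
    have hfilt2 : Finset.filter (· ∣ p ^ v) g.divisors = (p ^ v).divisors := by
      ext d
      simp only [Finset.mem_filter, Nat.mem_divisors]
      constructor
      · rintro ⟨_, h⟩
        exact ⟨h, hpvpos.ne'⟩
      · rintro ⟨h, _⟩
        exact ⟨⟨h.trans hpvg, hgpos.ne'⟩, h⟩
    rw [hfilt2, Finset.prod_pow_eq_pow_sum]
    -- compute the exponent sum
    have hsum : ∑ d ∈ (p ^ v).divisors, (g / d).totient = u.totient * p ^ v := by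
      have e1 : ∑ d ∈ (p ^ v).divisors, (g / d).totient
          = ∑ d ∈ (p ^ v).divisors, (g / (p ^ v / d)).totient := by
        conv_lhs => rw [← Nat.sum_div_divisors (p ^ v) (fun d => (g / d).totient)]
      rw [e1]
      have e2 : ∀ d ∈ (p ^ v).divisors, (g / (p ^ v / d)).totient = u.totient * d.totient := by
        intro d hd
        have hdpv : d ∣ p ^ v := (Nat.mem_divisors.1 hd).1
        rw [div_div_eq hpvg hdpv hpvpos, ← hu]
        have hcop : u.Coprime d := Nat.Coprime.coprime_dvd_right hdpv (hpu.symm.pow_right v)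
        rw [Nat.totient_mul hcop]
      rw [Finset.sum_congr rfl e2, ← Finset.mul_sum, Nat.sum_totient]
    rw [hsum]
    -- compute the right-hand side
    have hrhs : eval 1 (cyclotomic n' ℂ) = (p : ℂ) := by
      rw [← hpb, eval_one_cyclotomic_prime_pow]
    rw [hrhs]
    congr 1
    -- totient computation
    have hneq : n = p ^ (v + b' + 1) * u := by
      rw [hnn', ← hgu, ← hpb]
      ring
    have htn : n.totient = (p ^ v * (p ^ b' * (p - 1))) * u.totient := by
      rw [hneq, Nat.totient_mul ((Nat.Coprime.pow_left _ hpu)), 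
        Nat.totient_prime_pow_succ hp' (v + b'), pow_add]
      ring
    have htn' : n'.totient = p ^ b' * (p - 1) := by
      rw [← hpb, Nat.totient_prime_pow_succ hp']
    have hn'tpos : 0 < n'.totient := Nat.totient_pos.2 hn'pos
    symm
    refine Nat.div_eq_of_eq_mul_left hn'tpos ?_
    rw [htn, htn']
    ring
  · -- `n'` is not a prime power: everything is 1
    have hall : ∀ d ∈ g.divisors, (eval 1 (cyclotomic (n' * d) ℂ)) ^ (g / d).totient = 1 := by
      intro d hd
      have hdg : d ∣ g := (Nat.mem_divisors.1 hd).1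
      have hdpos : 0 < d := Nat.pos_of_dvd_of_pos hdg hgpos
      have hev : eval 1 (cyclotomic (n' * d) ℂ) = 1 := by
        refine eval_one_cyclotomic_not_prime_pow ?_
        intro q hq k hqk
        have hn'dvd : n' ∣ q ^ k := Dvd.dvd.mul_right (dvd_refl n') d |>.trans (dvd_of_eq hqk.symm)
        obtain ⟨j, hjk, hj⟩ := (Nat.dvd_prime_pow hq).1 hn'dvd
        exact not_prime_pow_aux hn'1 hpp hq j hj.symm
      rw [hev, one_pow]
    rw [Finset.prod_congr rfl hall, Finset.prod_const_one,
      eval_one_cyclotomic_not_prime_pow (not_prime_pow_aux hn'1 hpp), one_pow]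

/-- The main induction: `∏_{η ∈ P_n} Φ_m(η) = sval n m` for `0 < m < n`, `2 < n`. -/
lemma S_eq_sval {n : ℕ} (hn : 2 < n) :
    ∀ m : ℕ, 0 < m → m < n →
      ∏ η ∈ primitiveRoots n ℂ, eval η (cyclotomic m ℂ) = sval n m := by
  intro m
  induction m using Nat.strong_induction_on with
  | _ m ih =>
    intro hm hmn
    have hnpos : 0 < n := by omega
    have hnm : ¬ n ∣ m := fun h => absurd (Nat.le_of_dvd hm h) (by omega)
    have key : (∏ η ∈ primitiveRoots n ℂ, eval η (cyclotomic m ℂ)) *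
        ∏ d ∈ m.properDivisors, ∏ η ∈ primitiveRoots n ℂ, eval η (cyclotomic d ℂ)
        = sval n m * ∏ d ∈ m.properDivisors, sval n d := by
      have h1 : ∏ d ∈ m.divisors, ∏ η ∈ primitiveRoots n ℂ, eval η (cyclotomic d ℂ)
          = ∏ d ∈ m.divisors, sval n d := by
        rw [prod_divisors_eval hm, prod_pow_sub_one hnpos hm, prod_sval hnpos hm hnm,
          (Nat.totient_even hn).neg_one_pow, one_mul]
      rw [← Nat.cons_self_properDivisors hm.ne', Finset.prod_cons, Finset.prod_cons] at h1
      exact h1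
    have hP : ∀ d ∈ m.properDivisors, ∏ η ∈ primitiveRoots n ℂ, eval η (cyclotomic d ℂ)
        = sval n d := by
      intro d hd
      have hdm : d < m := (Nat.mem_properDivisors.1 hd).2
      have hdpos : 0 < d := Nat.pos_of_mem_properDivisors hd
      exact ih d hdm hdpos (lt_trans hdm hmn)
    rw [Finset.prod_congr rfl hP] at key
    have hne : ∏ d ∈ m.properDivisors, sval n d ≠ 0 := by
      refine Finset.prod_ne_zero_iff.2 fun d hd => ?_
      exact sval_ne_zero (Nat.pos_of_mem_properDivisors hd)
        (lt_trans ((Nat.mem_properDivisors.1 hd).2) hmn)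
    exact mul_right_cancel₀ hne key

/-- Symmetry. -/
lemma symm_prod {m n : ℕ} (hm : 0 < m) (hn : 0 < n) (he : Even n.totient) :
    ∏ ζ ∈ primitiveRoots m ℂ, eval ζ (cyclotomic n ℂ)
      = ∏ η ∈ primitiveRoots n ℂ, eval η (cyclotomic m ℂ) := by
  have h1 : ∏ ζ ∈ primitiveRoots m ℂ, eval ζ (cyclotomic n ℂ)
      = ∏ ζ ∈ primitiveRoots m ℂ, ∏ η ∈ primitiveRoots n ℂ, (ζ - η) :=
    Finset.prod_congr rfl fun ζ _ => eval_cyclotomic_prod hn ζ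
  have h2 : ∏ η ∈ primitiveRoots n ℂ, eval η (cyclotomic m ℂ)
      = ∏ η ∈ primitiveRoots n ℂ, ∏ ζ ∈ primitiveRoots m ℂ, (η - ζ) :=
    Finset.prod_congr rfl fun η _ => eval_cyclotomic_prod hm η
  have h3 : ∀ η ∈ primitiveRoots n ℂ, ∏ ζ ∈ primitiveRoots m ℂ, (η - ζ)
      = (-1 : ℂ) ^ m.totient * ∏ ζ ∈ primitiveRoots m ℂ, (ζ - η) := by
    intro η _
    rw [← Complex.card_primitiveRoots m, ← Finset.prod_const, ← Finset.prod_mul_distrib]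
    exact Finset.prod_congr rfl fun ζ _ => by ring
  have heven : Even (m.totient * n.totient) := he.mul_left _
  calc ∏ ζ ∈ primitiveRoots m ℂ, eval ζ (cyclotomic n ℂ)
      = ∏ η ∈ primitiveRoots n ℂ, ∏ ζ ∈ primitiveRoots m ℂ, (ζ - η) := by
        rw [h1]; exact Finset.prod_comm
    _ = ∏ η ∈ primitiveRoots n ℂ, eval η (cyclotomic m ℂ) := by
        rw [h2, Finset.prod_congr rfl h3, Finset.prod_mul_distrib, Finset.prod_const,
          Complex.card_primitiveRoots, ← pow_mul, heven.neg_one_pow, one_mul]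

/-- Unfold `res` for cyclotomics. -/
lemma res_cyclotomic_eq {m n : ℕ} (hm : 0 < m) :
    res (cyclotomic m ℚ) (cyclotomic n ℚ)
      = ∏ ζ ∈ primitiveRoots m ℂ, eval ζ (cyclotomic n ℂ) := by
  rw [res, (cyclotomic.monic m ℚ).leadingCoeff]
  rw [Rat.cast_one, one_pow, one_mul]
  have haroots : (cyclotomic m ℚ).aroots ℂ = (primitiveRoots m ℂ).val := by
    rw [aroots_def, map_cyclotomic,
      cyclotomic_eq_prod_X_sub_primitiveRoots (Complex.isPrimitiveRoot_exp m hm.ne'),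
      roots_prod_X_sub_C]
  have hae : ∀ r : ℂ, aeval r (cyclotomic n ℚ) = eval r (cyclotomic n ℂ) := by
    intro r
    rw [aeval_def, ← eval_map, map_cyclotomic]
  rw [haroots, Finset.prod_eq_multiset_prod]
  exact congrArg Multiset.prod (Multiset.map_congr rfl fun r _ => hae r)

lemma res_eq_sval {m n : ℕ} (hm : 0 < m) (hmn : m < n) (hn : 2 < n) :
    res (cyclotomic m ℚ) (cyclotomic n ℚ) = sval n m := by
  rw [res_cyclotomic_eq hm, symm_prod hm (by omega) (Nat.totient_even hn),
    S_eq_sval hn m hm hmn]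

end ResCyclo

theorem resultant_cyclotomic (m n : ℕ) (hm : 0 < m) (hmn : m < n) :
    (∀ p a : ℕ, p.Prime → 1 ≤ a → n = m * p ^ a →
      res (cyclotomic m ℚ) (cyclotomic n ℚ) = (p : ℂ) ^ m.totient) ∧
    ((¬ ∃ p a : ℕ, p.Prime ∧ 1 ≤ a ∧ n = m * p ^ a) →
      res (cyclotomic m ℚ) (cyclotomic n ℚ) = 1) := by
  rcases Nat.lt_or_ge n 3 with h3 | h3
  · -- small case: `n = 2`, `m = 1`
    have hn2 : n = 2 := by omega
    have hm1 : m = 1 := by omega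
    subst hn2; subst hm1
    have hres : res (cyclotomic 1 ℚ) (cyclotomic 2 ℚ) = 2 := by
      rw [ResCyclo.res_cyclotomic_eq one_pos, IsPrimitiveRoot.primitiveRoots_one,
        Finset.prod_singleton, cyclotomic_two, eval_add, eval_X, eval_one]
      norm_num
    constructor
    · intro p a hp ha hpa
      have hpa2 : p ^ a = 2 := by omega
      have hp2 : p = 2 := by
        have h1 : p ∣ 2 := hpa2 ▸ dvd_pow_self p (by omega)
        exact (Nat.prime_dvd_prime_iff_eq hp Nat.prime_two).1 h1
      subst hp2
      have ha1 : a = 1 := Nat.pow_right_injective le_rfl (show 2 ^ a = 2 ^ 1 by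
        rw [hpa2, pow_one])
      subst ha1
      rw [hres, Nat.totient_one, pow_one]
      norm_num
    · intro h
      exact absurd ⟨2, 1, Nat.prime_two, le_rfl, by norm_num⟩ h
  · have key := ResCyclo.res_eq_sval hm hmn h3
    constructor
    · intro p a hp ha hpa
      have hmdvd : m ∣ n := ⟨p ^ a, hpa⟩
      have hquot : n / m = p ^ a := by rw [hpa, Nat.mul_div_cancel_left _ hm]
      rw [key, ResCyclo.sval, if_pos hmdvd, hquot]
      obtain ⟨b, rfl⟩ : ∃ b, a = b + 1 := ⟨a - 1, by omega⟩
      haveI : Fact p.Prime := ⟨hp⟩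
      rw [eval_one_cyclotomic_prime_pow]
    · intro hno
      rw [key, ResCyclo.sval]
      split_ifs with hdvd
      · have h1 : 1 < n / m := by
          rcases Nat.lt_or_ge 1 (n / m) with h | h
          · exact h
          · exfalso
            have h2 := Nat.div_mul_cancel hdvd
            have h3 : n / m * m ≤ 1 * m := Nat.mul_le_mul_right m h
            omega
        rcases ResCyclo.eval_one_dichotomy h1 with ⟨p, a, hp, ha, hk, hv⟩ | ⟨_, hv⟩
        · exact absurd ⟨p, a, hp, ha, by rw [← Nat.mul_div_cancel' hdvd, hk]⟩ hno
        · rw [hv, one_pow]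
      · rfl
end

section
/- Let $f,g\in\mathbb{Q}[x]$ with leading coefficients $a,b$ and degrees $m,n$ respectively (with $m,n\ge 1$). Then $\Delta(f\circ g)=(-1)^{m^2 n(n-1)/2}\, a^{n-1} b^{m(mn-n-1)}\, \Delta(f)^n\, R(f\circ g, g')$. -/
open Polynomial

/-- The discriminant of a polynomial `f ∈ ℚ[x]`:
`Δ(f) = (-1)^{m(m-1)/2} / a * R(f, f')`. -/
noncomputable def disc (f : Polynomial ℚ) : ℂ :=
  (-1 : ℂ) ^ (f.natDegree * (f.natDegree - 1) / 2) / (f.leadingCoeff : ℂ) *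
    res f (derivative f)

private lemma roots_comp_bind (F G : Polynomial ℂ) (hF : F ≠ 0) (hG : G.natDegree ≠ 0) :
    (F.comp G).roots = F.roots.bind fun r => (G - C r).roots := by
  have hsplit : F.roots.card = F.natDegree :=
    splits_iff_card_roots.mp (IsAlgClosed.splits F)
  have hsub : ∀ r : ℂ, G - C r ≠ 0 := by
    intro r h
    have : G = C r := by linear_combination (norm := ring_nf) h
    rw [this, natDegree_C] at hG
    exact hG rfl
  have hcomp : F.comp G = C F.leadingCoeff * ((F.roots.map fun r => G - C r)).prod := by
    conv_lhs => rw [← C_leadingCoeff_mul_prod_multiset_X_sub_C hsplit]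
    rw [mul_comp, C_comp, multiset_prod_comp, Multiset.map_map]
    simp [sub_comp]
  rw [hcomp, roots_C_mul _ (leadingCoeff_ne_zero.mpr hF),
    roots_multiset_prod _ (by
      simp only [Multiset.mem_map]
      rintro ⟨r, -, h⟩
      exact hsub r h), Multiset.bind_map]

private lemma sign_exp_id (m n : ℕ) (hm : 1 ≤ m) (hn : 1 ≤ n) :
    m * n * (m * n - 1) / 2 = m ^ 2 * n * (n - 1) / 2 + (m * (m - 1) / 2) * n := by
  obtain ⟨M, rfl⟩ : ∃ M, m = M + 1 := ⟨m - 1, by omega⟩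
  obtain ⟨N, rfl⟩ : ∃ N, n = N + 1 := ⟨n - 1, by omega⟩
  obtain ⟨s, hs⟩ := Nat.even_mul_succ_self N
  obtain ⟨t, ht⟩ := Nat.even_mul_succ_self M
  have h1 : (M+1) * (N+1) * ((M+1)*(N+1) - 1) = 2 * ((M+1)^2 * s + t * (N+1)) := by
    have e : (M+1)*(N+1) - 1 = M*N + M + N := by ring_nf; omega
    rw [e]; nlinarith [hs, ht]
  have h2 : (M+1)^2 * (N+1) * ((N+1) - 1) = 2 * ((M+1)^2 * s) := by
    simp only [Nat.add_sub_cancel]; nlinarith [hs]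
  have h3 : (M+1) * ((M+1) - 1) = 2 * t := by
    simp only [Nat.add_sub_cancel]; nlinarith [ht]
  rw [h1, h2, h3]
  simp only [Nat.mul_div_cancel_left _ (by norm_num : 0 < 2)]

theorem disc_comp (f g : Polynomial ℚ) (m n : ℕ) (a b : ℚ)
    (hm : 1 ≤ m) (hn : 1 ≤ n) (hfm : f.natDegree = m) (hgn : g.natDegree = n)
    (ha : f.leadingCoeff = a) (hb : g.leadingCoeff = b) :
    disc (f.comp g) =
      (-1 : ℂ) ^ (m ^ 2 * n * (n - 1) / 2) * (a : ℂ) ^ (n - 1) *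
        (b : ℂ) ^ ((m : ℤ) * ((m : ℤ) * n - n - 1)) * disc f ^ n *
        res (f.comp g) (derivative g) := by
  have hf0 : f ≠ 0 := by intro h; rw [h, natDegree_zero] at hfm; omega
  have hg0 : g ≠ 0 := by intro h; rw [h, natDegree_zero] at hgn; omega
  have ha0 : a ≠ 0 := ha ▸ leadingCoeff_ne_zero.mpr hf0
  have hb0 : b ≠ 0 := hb ▸ leadingCoeff_ne_zero.mpr hg0
  have hA0 : (a : ℂ) ≠ 0 := by exact_mod_cast (Rat.cast_ne_zero (α := ℂ)).mpr ha0
  have hB0 : (b : ℂ) ≠ 0 := by exact_mod_cast (Rat.cast_ne_zero (α := ℂ)).mpr hb0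
  have hFne : f.map (algebraMap ℚ ℂ) ≠ 0 :=
    (Polynomial.map_ne_zero_iff (algebraMap ℚ ℂ).injective).mpr hf0
  have hGdeg : (g.map (algebraMap ℚ ℂ)).natDegree = n := by
    rw [natDegree_map, hgn]
  have hdcomp : (f.comp g).natDegree = m * n := by rw [natDegree_comp, hfm, hgn]
  have hlcomp : (f.comp g).leadingCoeff = a * b ^ m := by
    rw [leadingCoeff_comp (by rw [hgn]; omega), ha, hb, hfm]
  have hck : ∀ p : Polynomial ℚ, p.natDegree ≠ 0 →
      (derivative p).natDegree = p.natDegree - 1 := fun p hp =>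
    natDegree_eq_of_degree_eq_some (degree_derivative_eq p (Nat.pos_of_ne_zero hp))
  have hd1 : (derivative (f.comp g)).natDegree = m * n - 1 := by
    rw [hck _ (by rw [hdcomp]; exact Nat.ne_of_gt (Nat.mul_pos hm hn)), hdcomp]
  have hd2 : (derivative f).natDegree = m - 1 := by rw [hck _ (by omega), hfm]
  have hd3 : (derivative g).natDegree = n - 1 := by rw [hck _ (by omega), hgn]
  have haroots : (f.comp g).aroots ℂ =
      (f.aroots ℂ).bind fun r => ((g.map (algebraMap ℚ ℂ)) - C r).roots := by
    rw [aroots_def, Polynomial.map_comp]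
    exact roots_comp_bind _ _ hFne (by rw [hGdeg]; omega)
  have hcard : ∀ r : ℂ, ((g.map (algebraMap ℚ ℂ) - C r).roots).card = n := by
    intro r
    rw [splits_iff_card_roots.mp (IsAlgClosed.splits _), natDegree_sub_C, hGdeg]
  have heval : ∀ r : ℂ, ∀ s ∈ (g.map (algebraMap ℚ ℂ) - C r).roots, aeval s g = r := by
    intro r s hs
    have hne : g.map (algebraMap ℚ ℂ) - C r ≠ 0 := by
      intro h
      have : (g.map (algebraMap ℚ ℂ)) = C r := by
        linear_combination (norm := ring_nf) h
      rw [this, natDegree_C] at hGdeg; omega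
    have h0 := (mem_roots hne).mp hs
    have hev : (g.map (algebraMap ℚ ℂ)).eval s = r := by
      simpa [IsRoot, eval_sub, eval_C, sub_eq_zero] using h0
    rw [← hev, aeval_def, ← eval_map]
  -- the key product computation
  have hP2 : (((f.comp g).aroots ℂ).map fun s => aeval (aeval s g) (derivative f)).prod
      = ((f.aroots ℂ).map fun r => aeval r (derivative f)).prod ^ n := by
    rw [haroots, Multiset.map_bind, Multiset.prod_bind, ← Multiset.prod_map_pow]
    congr 1
    refine Multiset.map_congr rfl ?_
    intro r _
    rw [Multiset.map_congr rfl (fun s hs => by rw [heval r s hs]),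
      Multiset.map_const', Multiset.prod_replicate, hcard]
  have hsplitprod :
      (((f.comp g).aroots ℂ).map fun s => aeval s (derivative (f.comp g))).prod
        = ((f.aroots ℂ).map fun r => aeval r (derivative f)).prod ^ n *
          (((f.comp g).aroots ℂ).map fun s => aeval s (derivative g)).prod := by
    rw [← hP2, ← Multiset.prod_map_mul]
    refine congrArg Multiset.prod (Multiset.map_congr rfl fun s _ => ?_)
    rw [derivative_comp, map_mul, aeval_comp]
    ring
  set P : ℂ := ((f.aroots ℂ).map fun r => aeval r (derivative f)).prod with hP
  set Q : ℂ := (((f.comp g).aroots ℂ).map fun s => aeval s (derivative g)).prod with hQ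
  have hres_fg : res (f.comp g) (derivative g) = ((a : ℂ) * (b : ℂ) ^ m) ^ (n - 1) * Q := by
    rw [res, hlcomp, hd3]; push_cast; ring
  have hdisc_f : disc f = (-1 : ℂ) ^ (m * (m - 1) / 2) / (a : ℂ) * ((a : ℂ) ^ (m - 1) * P) := by
    rw [disc, res, hfm, ha, hd2]
  have hdisc_fg : disc (f.comp g) =
      (-1 : ℂ) ^ (m * n * (m * n - 1) / 2) / ((a : ℂ) * (b : ℂ) ^ m) *
        (((a : ℂ) * (b : ℂ) ^ m) ^ (m * n - 1) * (P ^ n * Q)) := by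
    rw [disc, res, hdcomp, hlcomp, hd1, hsplitprod]; push_cast; ring
  -- final algebraic identity
  rw [hdisc_fg, hres_fg, hdisc_f]
  obtain ⟨M, rfl⟩ : ∃ M, m = M + 1 := ⟨m - 1, by omega⟩
  obtain ⟨N, rfl⟩ : ∃ N, n = N + 1 := ⟨n - 1, by omega⟩
  have hsign : (-1 : ℂ) ^ ((M+1) * (N+1) * ((M+1) * (N+1) - 1) / 2)
      = (-1 : ℂ) ^ ((M+1) ^ 2 * (N+1) * ((N+1) - 1) / 2) *
        ((-1 : ℂ) ^ ((M+1) * ((M+1) - 1) / 2)) ^ (N+1) := by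
    rw [sign_exp_id (M+1) (N+1) (by omega) (by omega), pow_add, pow_mul]
  have hzpow : (b : ℂ) ^ (((M+1 : ℕ) : ℤ) * (((M+1 : ℕ) : ℤ) * (N+1 : ℕ) - (N+1 : ℕ) - 1))
      = (b : ℂ) ^ (M^2*N + M*N + M^2) / (b : ℂ) := by
    have he : ((M+1 : ℕ) : ℤ) * (((M+1 : ℕ) : ℤ) * (N+1 : ℕ) - (N+1 : ℕ) - 1)
        = ((M^2*N + M*N + M^2 : ℕ) : ℤ) - 1 := by push_cast; ring
    rw [he, zpow_sub₀ hB0, zpow_natCast, zpow_one]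
  have hsub1 : (M+1) * (N+1) - 1 = M*N + M + N := by ring_nf; omega
  have hsub2 : (N+1) - 1 = N := by omega
  have hsub3 : (M+1) - 1 = M := by omega
  rw [hsign, hzpow, hsub1, hsub2, hsub3]
  field_simp
  rw [div_pow]
  field_simp
  ring
end

section
/- Let $f(x)\in\mathbb{Q}[x]$ be of degree $m\ge 1$ with leading coefficient $a$, and let $g(x)=bx^n+c$ with $b\ne 0$, $n\ge 1$. Then $\Delta(f\circ g)=(-1)^{mn(n-1)(m+2n)/2}\, a^{n-1} b^{m(mn-1)}\, \Delta(f)^n\, n^{mn}\, f(c)^{n-1}$. -/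
open Polynomial

private lemma neg_one_pow_eq_of_even_add' {E1 E2 : ℕ} (h : Even (E1 + E2)) :
    ((-1 : ℂ)) ^ E1 = (-1) ^ E2 := by
  have h1 : ((-1:ℂ))^(E1+E2) = 1 := h.neg_one_pow
  rw [pow_add] at h1
  have h2 : ((-1:ℂ))^E2 * (-1)^E2 = 1 := by
    rw [← pow_add]; exact (Even.add_self E2).neg_one_pow
  calc ((-1:ℂ))^E1 = (-1)^E1 * ((-1)^E2 * (-1)^E2) := by rw [h2, mul_one]
    _ = ((-1)^E1 * (-1)^E2) * (-1)^E2 := by ring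
    _ = (-1)^E2 := by rw [h1, one_mul]

private lemma card_roots_X_pow_sub_C' (n : ℕ) (t : ℂ) :
    Multiset.card ((X ^ n - C t).roots) = n := by
  rw [splits_iff_card_roots.mp (IsAlgClosed.splits _), natDegree_X_pow_sub_C]

private lemma prod_roots_X_pow_sub_C' {n : ℕ} (hn : 1 ≤ n) (t : ℂ) :
    ((X ^ n - C t).roots).prod = (-1) ^ (n + 1) * t := by
  have hsp : Splits (X ^ n - C t) := IsAlgClosed.splits _
  have hmo : (X ^ n - C t).Monic := monic_X_pow_sub_C t (by omega)
  have h := hsp.eq_prod_roots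
  rw [hmo.leadingCoeff, C_1, one_mul] at h
  have h0 := congrArg (eval 0) h
  rw [eval_sub, eval_pow, eval_X, eval_C, zero_pow (by omega : n ≠ 0),
    zero_sub, eval_multiset_prod, Multiset.map_map] at h0
  simp only [Function.comp, eval_sub, eval_X, eval_C, zero_sub] at h0
  rw [Multiset.prod_map_neg, card_roots_X_pow_sub_C' n] at h0
  have h1 : ((-1:ℂ))^n * ((-1:ℂ))^n = 1 := by
    rw [← pow_add]; exact (Even.add_self n).neg_one_pow
  calc ((X ^ n - C t).roots).prod
      = ((-1:ℂ)^n * (-1:ℂ)^n) * ((X ^ n - C t).roots).prod := by rw [h1, one_mul]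
    _ = (-1:ℂ)^n * ((-1:ℂ)^n * ((X ^ n - C t).roots).prod) := by ring
    _ = (-1:ℂ)^n * (-t) := by rw [← h0]
    _ = (-1) ^ (n + 1) * t := by rw [pow_succ]; ring

private lemma aroots_comp_eq' (f g : Polynomial ℚ) (hf : f ≠ 0) (hg : g.natDegree ≠ 0) :
    (f.comp g).aroots ℂ = (f.aroots ℂ).bind
      (fun α => ((g.map (algebraMap ℚ ℂ)) - C α).roots) := by
  have hQ0 : ∀ α : ℂ, g.map (algebraMap ℚ ℂ) - C α ≠ 0 := by
    intro α h
    have h2 : g.map (algebraMap ℚ ℂ) = C α := by rwa [sub_eq_zero] at h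
    have : (g.map (algebraMap ℚ ℂ)).natDegree = 0 := by rw [h2, natDegree_C]
    rw [natDegree_map] at this
    exact hg this
  have hsp : Splits (f.map (algebraMap ℚ ℂ)) := IsAlgClosed.splits _
  rw [aroots_def, Polynomial.map_comp]
  conv_lhs => rw [hsp.eq_prod_roots]
  rw [mul_comp, C_comp, multiset_prod_comp, Multiset.map_map]
  have hlc : (f.map (algebraMap ℚ ℂ)).leadingCoeff ≠ 0 := by
    rw [leadingCoeff_map]
    simpa using leadingCoeff_ne_zero.mpr hf
  rw [roots_C_mul _ hlc]
  have hmc : Multiset.map ((fun p => p.comp (g.map (algebraMap ℚ ℂ))) ∘ fun a => X - C a)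
      (f.map (algebraMap ℚ ℂ)).roots
      = Multiset.map (fun α => g.map (algebraMap ℚ ℂ) - C α) (f.map (algebraMap ℚ ℂ)).roots := by
    refine Multiset.map_congr rfl ?_
    intro α _
    simp [sub_comp]
  rw [hmc, roots_multiset_prod, Multiset.bind_map, aroots_def]
  intro h0
  obtain ⟨α, _, hα⟩ := Multiset.mem_map.mp h0
  exact hQ0 α hα

private lemma even_sign_aux' (m' n' : ℕ) :
    Even ((m'*n'+m'+n'+1)*(m'*n'+m'+n')/2 + ((n'+2)*(m'+1))*n' + (m'+1)*n'
      + ((m'*n'+m'+n'+1)*n'*((m'+1)+2*(n'+1))/2 + ((m'+1)*m'/2)*(n'+1))) := by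
  set K := m'*n'+m'+n' with hK
  obtain ⟨k2, hk2'⟩ := Nat.even_mul_succ_self n'
  have hk2 : n'*(n'+1) = 2*k2 := by omega
  obtain ⟨x1, hx1⟩ : ∃ x, (K+1)*K = 2*x := by
    obtain ⟨k, hk⟩ := Nat.even_mul_succ_self K
    have hk' : (K+1)*K = k + k := by rw [mul_comm]; exact hk
    exact ⟨k, by omega⟩
  obtain ⟨x2, hx2⟩ : ∃ x, (K+1)*n'*((m'+1)+2*(n'+1)) = 2*x := by
    refine ⟨(m'+1)*k2*((m'+1)+2*(n'+1)), ?_⟩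
    rw [show (K+1)*n' = (m'+1)*(n'*(n'+1)) from by rw [hK]; ring, hk2]; ring
  obtain ⟨x3, hx3⟩ : ∃ x, (m'+1)*m' = 2*x := by
    obtain ⟨k, hk⟩ := Nat.even_mul_succ_self m'
    have hk' : (m'+1)*m' = k + k := by rw [mul_comm]; exact hk
    exact ⟨k, by omega⟩
  rw [hx1, hx2, hx3, Nat.mul_div_cancel_left _ (by norm_num : 0 < 2),
    Nat.mul_div_cancel_left _ (by norm_num : 0 < 2),
    Nat.mul_div_cancel_left _ (by norm_num : 0 < 2)]
  have hrel : x2 + x3*(n'+1) = x1 + (m'+1)*(n'+1)*(n'+1)*n' := by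
    have h2 : (K+1)*n'*((m'+1)+2*(n'+1)) + ((m'+1)*m')*(n'+1)
        = (K+1)*K + 2*((m'+1)*(n'+1)*(n'+1)*n') := by rw [hK]; ring
    have h3 : ((m'+1)*m')*(n'+1) = 2*(x3*(n'+1)) := by rw [hx3]; ring
    omega
  have hS : ((n'+2)*(m'+1))*n' + (m'+1)*n' + (m'+1)*(n'+1)*(n'+1)*n'
      = 2*((m'+1)*k2*(n'+2) + (m'+1)*n') := by
    have h1 : ((n'+2)*(m'+1))*n' + (m'+1)*n' + (m'+1)*(n'+1)*(n'+1)*n'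
        = (m'+1)*(n'*(n'+1))*(n'+2) + 2*((m'+1)*n') := by ring
    rw [h1, hk2]; ring
  exact ⟨x1 + ((m'+1)*k2*(n'+2) + (m'+1)*n'), by omega⟩

private lemma final_scalar (m n : ℕ) (hm : 1 ≤ m) (hn : 1 ≤ n) (A B N fc D : ℂ)
    (hA : A ≠ 0) (hB : B ≠ 0) (hN : N ≠ 0) :
    (-1:ℂ)^(m*n*(m*n-1)/2) / (A*B^m) *
      ((A*B^m)^(m*n-1) *
        ((((B*N)^m * D)^n) * (((-1:ℂ)^(n+1))^m * ((-1:ℂ)^m * (fc / A) * (B⁻¹)^m))^(n-1)))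
    = (-1:ℂ)^(m*n*(n-1)*(m+2*n)/2) * A^(n-1) * B^(m*(m*n-1)) *
        ((-1:ℂ)^(m*(m-1)/2) / A * (A^(m-1) * D))^n * N^(m*n) * fc^(n-1) := by
  obtain ⟨m', rfl⟩ : ∃ m', m = m' + 1 := ⟨m - 1, by omega⟩
  obtain ⟨n', rfl⟩ : ∃ n', n = n' + 1 := ⟨n - 1, by omega⟩
  rw [show (m'+1)*(n'+1) = (m'*n'+m'+n')+1 from by ring]
  simp only [Nat.add_sub_cancel]
  have hL : ∀ s : ℂ, s^((m'*n'+m'+n'+1)*(m'*n'+m'+n')/2) / (A*B^(m'+1)) *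
      ((A*B^(m'+1))^(m'*n'+m'+n') *
        ((((B*N)^(m'+1) * D)^(n'+1)) *
          ((s^(n'+1+1))^(m'+1) * (s^(m'+1) * (fc / A) * (B⁻¹)^(m'+1)))^n'))
      = s^((m'*n'+m'+n'+1)*(m'*n'+m'+n')/2 + ((n'+2)*(m'+1))*n' + (m'+1)*n') *
        ((A*B^(m'+1))^(m'*n'+m'+n') * (((B*N)^(m'+1) * D)^(n'+1)) *
          ((fc / A) * (B⁻¹)^(m'+1))^n' / (A*B^(m'+1))) := fun s => by
    ring
  have hR : ∀ s : ℂ, s^((m'*n'+m'+n'+1)*n'*((m'+1)+2*(n'+1))/2) * A^n' *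
        B^((m'+1)*(m'*n'+m'+n')) *
        (s^((m'+1)*m'/2) / A * (A^m' * D))^(n'+1) * N^(m'*n'+m'+n'+1) * fc^n'
      = s^((m'*n'+m'+n'+1)*n'*((m'+1)+2*(n'+1))/2 + ((m'+1)*m'/2)*(n'+1)) *
        (A^n' * B^((m'+1)*(m'*n'+m'+n')) * ((A^m' * D)/A)^(n'+1) * N^(m'*n'+m'+n'+1) * fc^n') := fun s => by
    ring
  rw [hL (-1), hR (-1)]
  rw [neg_one_pow_eq_of_even_add' (even_sign_aux' m' n')]
  congr 1
  field_simp
  have e1 : B ^ (m' * n') * B⁻¹ ^ (m' * n') = 1 := by rw [← mul_pow, mul_inv_cancel₀ hB, one_pow]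
  have e2 : B ^ n' * B⁻¹ ^ n' = 1 := by rw [← mul_pow, mul_inv_cancel₀ hB, one_pow]
  have e3 : A * A⁻¹ = 1 := mul_inv_cancel₀ hA
  linear_combination (A ^ m' * A ^ (m' * n') * A ^ n' * B * B ^ (m' * 2) * B ^ m' ^ 2 * B ^ (m' ^ 2 * n')
    * N * N ^ m' * N ^ (m' * n') * N ^ n' * D * D ^ n' * fc ^ n' * A⁻¹ ^ n' * B ^ (m' * n' * 2) * B ^ n')
    * (B ^ n' * B⁻¹ ^ n' * e1 + e2 - e3)

theorem disc_comp_binomial (f : Polynomial ℚ) (m n : ℕ) (a b c : ℚ)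
    (hm : 1 ≤ m) (hn : 1 ≤ n) (hfm : f.natDegree = m) (ha : f.leadingCoeff = a)
    (hb : b ≠ 0) :
    disc (f.comp (C b * X ^ n + C c)) =
      (-1 : ℂ) ^ (m * n * (n - 1) * (m + 2 * n) / 2) * (a : ℂ) ^ (n - 1) *
        (b : ℂ) ^ (m * (m * n - 1)) * disc f ^ n * (n : ℂ) ^ (m * n) *
        ((f.eval c : ℚ) : ℂ) ^ (n - 1) := by
  have hf0 : f ≠ 0 := fun h => by simp [h] at hfm; omega
  have ha0 : a ≠ 0 := ha ▸ leadingCoeff_ne_zero.mpr hf0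
  have hA : (a : ℂ) ≠ 0 := by exact_mod_cast ha0
  have hB : (b : ℂ) ≠ 0 := by exact_mod_cast hb
  have hN : (n : ℂ) ≠ 0 := Nat.cast_ne_zero.mpr (by omega)
  have hgdeg : (C b * X ^ n + C c).natDegree = n := by
    compute_degree!
    simp [show n ≠ 0 by omega, hb]
  have hgdeg0 : (C b * X ^ n + C c).natDegree ≠ 0 := by omega
  have hglc : (C b * X ^ n + C c).leadingCoeff = b := by
    rw [leadingCoeff, hgdeg]
    simp [coeff_C, (by omega : n ≠ 0)]
    exact fun h => absurd h (by omega)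
  have hFdeg : (f.comp (C b * X ^ n + C c)).natDegree = m * n := by
    rw [natDegree_comp, hfm, hgdeg]
  have hFlc : (f.comp (C b * X ^ n + C c)).leadingCoeff = a * b ^ m := by
    rw [leadingCoeff_comp hgdeg0, ha, hglc, hfm]
  have hf'deg : (derivative f).natDegree = m - 1 := by
    have := degree_derivative_eq f (by omega : 0 < f.natDegree)
    rw [hfm] at this
    exact natDegree_eq_of_degree_eq_some this
  have hF'deg : (derivative (f.comp (C b * X ^ n + C c))).natDegree = m * n - 1 := by
    have := degree_derivative_eq (f.comp (C b * X ^ n + C c)) (by rw [hFdeg]; positivity)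
    rw [hFdeg] at this
    exact natDegree_eq_of_degree_eq_some this
  have hRcard : Multiset.card (f.aroots ℂ) = m := by
    rw [aroots_def, splits_iff_card_roots.mp (IsAlgClosed.splits _), natDegree_map, hfm]
  have hPfac : f.map (algebraMap ℚ ℂ) = C (a:ℂ) *
      ((f.aroots ℂ).map fun α => X - C α).prod := by
    have h := (IsAlgClosed.splits (f.map (algebraMap ℚ ℂ))).eq_prod_roots
    rwa [leadingCoeff_map, ha, eq_ratCast, ← aroots_def] at h
  -- the mapped binomial
  have hQ : (C b * X ^ n + C c).map (algebraMap ℚ ℂ) = C (b:ℂ) * X ^ n + C (c:ℂ) := by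
    simp [Polynomial.map_add, Polynomial.map_mul, Polynomial.map_pow, map_C, map_X, eq_ratCast]
  have hQα : ∀ α : ℂ, (C b * X ^ n + C c).map (algebraMap ℚ ℂ) - C α
      = C (b:ℂ) * (X ^ n - C ((α - c) / b)) := by
    intro α
    rw [hQ, mul_sub, ← C_mul, mul_div_cancel₀ _ hB, C_sub]
    ring
  have hSroots : ∀ α : ℂ, ((C b * X ^ n + C c).map (algebraMap ℚ ℂ) - C α).roots
      = (X ^ n - C ((α - c)/b)).roots := by
    intro α; rw [hQα α, roots_C_mul _ hB]
  have hScard : ∀ α : ℂ,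
      Multiset.card (((C b * X ^ n + C c).map (algebraMap ℚ ℂ) - C α).roots) = n := by
    intro α; rw [hSroots α, card_roots_X_pow_sub_C']
  have hSprod : ∀ α : ℂ,
      (((C b * X ^ n + C c).map (algebraMap ℚ ℂ) - C α).roots).prod
        = (-1)^(n+1) * ((α - c)/b) := by
    intro α; rw [hSroots α, prod_roots_X_pow_sub_C' hn]
  have haevg : ∀ (α : ℂ), ∀ r ∈ ((C b * X ^ n + C c).map (algebraMap ℚ ℂ) - C α).roots,
      aeval r (C b * X ^ n + C c) = α := by
    intro α r hr
    have hroot := (mem_roots'.mp hr).2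
    rw [IsRoot.def, eval_sub, eval_C, sub_eq_zero] at hroot
    rw [aeval_def, ← eval_map]
    exact hroot
  have haevg' : ∀ r : ℂ, aeval r (derivative (C b * X ^ n + C c))
      = (b:ℂ) * (n:ℂ) * r^(n-1) := by
    intro r
    rw [derivative_add, derivative_C, add_zero, derivative_C_mul, derivative_X_pow]
    simp only [map_mul, aeval_C, map_pow, aeval_X]
    rw [eq_ratCast]
    push_cast
    ring
  -- the inner product over the fiber of each root α of f
  have hinner : ∀ (α : ℂ),
      ((((C b * X ^ n + C c).map (algebraMap ℚ ℂ) - C α).roots).map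
        (fun r => aeval r (derivative (f.comp (C b * X ^ n + C c))))).prod
      = ((b:ℂ) * (n:ℂ) * aeval α (derivative f))^n * ((-1:ℂ)^(n+1) * ((α - c)/b))^(n-1) := by
    intro α
    have hcongr : ∀ r ∈ ((C b * X ^ n + C c).map (algebraMap ℚ ℂ) - C α).roots,
        aeval r (derivative (f.comp (C b * X ^ n + C c)))
          = ((b:ℂ) * (n:ℂ) * aeval α (derivative f)) * r^(n-1) := by
      intro r hr
      rw [derivative_comp, map_mul, aeval_comp, haevg α r hr, haevg' r]
      ring
    rw [Multiset.map_congr rfl hcongr]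
    have hsplit : (fun r : ℂ => ((b:ℂ) * (n:ℂ) * aeval α (derivative f)) * r^(n-1))
        = fun r : ℂ => (fun _ : ℂ => ((b:ℂ) * (n:ℂ) * aeval α (derivative f))) r
            * (fun r : ℂ => r^(n-1)) r := rfl
    rw [hsplit, Multiset.prod_map_mul, Multiset.map_const', Multiset.prod_replicate,
      hScard α, Multiset.prod_map_pow]
    rw [Multiset.map_id', hSprod α]
  -- the full product over all roots of f ∘ g
  have hT : (((f.comp (C b * X ^ n + C c)).aroots ℂ).map
        (fun r => aeval r (derivative (f.comp (C b * X ^ n + C c))))).prod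
      = ((((b:ℂ)*(n:ℂ))^m * ((f.aroots ℂ).map (fun r => aeval r (derivative f))).prod)^n) *
          (((-1:ℂ)^(n+1))^m *
            ((-1:ℂ)^m * (((f.eval c : ℚ):ℂ) / (a:ℂ)) * (((b:ℂ))⁻¹)^m))^(n-1) := by
    rw [aroots_comp_eq' f _ hf0 hgdeg0, Multiset.map_bind, Multiset.prod_bind]
    rw [Multiset.map_congr rfl (fun α _ => hinner α)]
    have hsplit : (fun α : ℂ => ((b:ℂ) * (n:ℂ) * aeval α (derivative f))^n
          * ((-1:ℂ)^(n+1) * ((α - c)/b))^(n-1))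
        = fun α : ℂ => (fun α : ℂ => ((b:ℂ) * (n:ℂ) * aeval α (derivative f))^n) α
            * (fun α : ℂ => ((-1:ℂ)^(n+1) * ((α - c)/b))^(n-1)) α := rfl
    rw [hsplit, Multiset.prod_map_mul, Multiset.prod_map_pow, Multiset.prod_map_pow]
    -- first factor
    have h1 : (Multiset.map (fun α : ℂ => (b:ℂ) * (n:ℂ) * aeval α (derivative f))
        (f.aroots ℂ)).prod
        = ((b:ℂ)*(n:ℂ))^m * ((f.aroots ℂ).map (fun r => aeval r (derivative f))).prod := by
      have hs : (fun α : ℂ => (b:ℂ) * (n:ℂ) * aeval α (derivative f))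
          = fun α : ℂ => (fun _ : ℂ => (b:ℂ) * (n:ℂ)) α
              * (fun α : ℂ => aeval α (derivative f)) α := rfl
      rw [hs, Multiset.prod_map_mul, Multiset.map_const', Multiset.prod_replicate, hRcard]
    -- second factor
    have h2 : (Multiset.map (fun α : ℂ => (-1:ℂ)^(n+1) * ((α - c)/b)) (f.aroots ℂ)).prod
        = ((-1:ℂ)^(n+1))^m *
            ((-1:ℂ)^m * (((f.eval c : ℚ):ℂ) / (a:ℂ)) * (((b:ℂ))⁻¹)^m) := by
      have hs : (fun α : ℂ => (-1:ℂ)^(n+1) * ((α - c)/b))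
          = fun α : ℂ => (fun _ : ℂ => (-1:ℂ)^(n+1)) α
              * (fun α : ℂ => (α - (c:ℂ)) * ((b:ℂ))⁻¹) α := by
        funext α; rw [div_eq_mul_inv]
      rw [hs, Multiset.prod_map_mul, Multiset.map_const', Multiset.prod_replicate, hRcard]
      congr 1
      have hs2 : (fun α : ℂ => (α - (c:ℂ)) * ((b:ℂ))⁻¹)
          = fun α : ℂ => (fun α : ℂ => (-1:ℂ) * ((c:ℂ) - α)) α * (fun _ : ℂ => ((b:ℂ))⁻¹) α := by
        funext α; ring
      rw [hs2, Multiset.prod_map_mul, Multiset.map_const', Multiset.prod_replicate, hRcard]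
      have hs3 : (fun α : ℂ => (-1:ℂ) * ((c:ℂ) - α))
          = fun α : ℂ => (fun _ : ℂ => (-1:ℂ)) α * (fun α : ℂ => ((c:ℂ) - α)) α := rfl
      rw [hs3, Multiset.prod_map_mul, Multiset.map_const', Multiset.prod_replicate, hRcard]
      -- evaluate the factorization at c
      have hc : ((f.aroots ℂ).map (fun α : ℂ => (c:ℂ) - α)).prod
          = ((f.eval c : ℚ):ℂ) / (a:ℂ) := by
        have h := congrArg (eval ((c:ℚ):ℂ)) hPfac
        rw [show ((c:ℚ):ℂ) = algebraMap ℚ ℂ c from (eq_ratCast _ c).symm, eval_map, eval₂_at_apply,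
          eq_ratCast] at h
        rw [eval_mul, eval_C, eval_multiset_prod, Multiset.map_map] at h
        simp only [Function.comp, eval_sub, eval_X, eval_C] at h
        rw [h]
        exact (mul_div_cancel_left₀ _ hA).symm
      rw [hc]
    rw [h1, h2]
  have hcast : ((a * b ^ m : ℚ) : ℂ) = (a:ℂ) * (b:ℂ)^m := by push_cast; ring
  simp only [disc, res]
  rw [hFdeg, hFlc, hfm, ha, hf'deg, hF'deg, hcast, hT]
  exact final_scalar m n hm hn _ _ _ _ _ hA hB hN
end

section
/- Let $m,n\ge 1$, $p$ prime, $T(x)=\Phi_{p^m}(\Phi_{2^n}(x))$, $T(\theta)=0$, and $K=\mathbb{Q}(\theta)$. Then the index $[\mathcal{O}_K:\mathbb{Z}[\theta]]$ is not divisible by $p$. -/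
open Polynomial

theorem T_eisenstein (m n p : ℕ) (hm : 0 < m) (hn : 0 < n) (hp : p.Prime) :
    ((cyclotomic (p ^ m) ℤ).comp (X ^ 2 ^ (n-1) + 1)).IsEisensteinAt
      (Submodule.span ℤ {(p : ℤ)}) := by
  haveI : Fact p.Prime := ⟨hp⟩
  set T : ℤ[X] := (cyclotomic (p ^ m) ℤ).comp (X ^ 2 ^ (n-1) + 1) with hT
  have hk : (0:ℕ) < 2 ^ (n-1) := Nat.pow_pos (by norm_num)
  have hXC : (X ^ 2 ^ (n-1) + 1 : ℤ[X]) = X ^ 2 ^ (n-1) + C 1 := by simp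
  have hmonic : T.Monic := by
    apply (cyclotomic.monic _ ℤ).comp
    · rw [hXC]; exact monic_X_pow_add_C 1 hk.ne'
    · rw [hXC, natDegree_X_pow_add_C]; omega
  have hcyc : cyclotomic (p ^ m) (ZMod p) = (X - 1) ^ (p ^ m - p ^ (m - 1)) := by
    have := cyclotomic_mul_prime_pow_eq (ZMod p) (p := p) (m := 1) (by simpa using hp.one_lt.ne') hm
    simpa [cyclotomic_one] using this
  have hmap : T.map (Int.castRingHom (ZMod p)) = X ^ T.natDegree := by
    have h1 : T.map (Int.castRingHom (ZMod p)) =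
        (cyclotomic (p ^ m) (ZMod p)).comp (X ^ 2 ^ (n-1) + 1) := by
      rw [hT, map_comp, map_cyclotomic_int]
      simp
    rw [h1, hcyc, pow_comp, sub_comp, X_comp, one_comp, add_sub_cancel_right, ← pow_mul]
    congr 1
    have hnd := hmonic.natDegree_map (Int.castRingHom (ZMod p))
    rw [← hnd, h1, hcyc, natDegree_comp, natDegree_pow,
      show (X - 1 : (ZMod p)[X]) = X - C 1 by simp, natDegree_X_sub_C,
      show (X ^ 2 ^ (n-1) + 1 : (ZMod p)[X]) = X ^ 2 ^ (n-1) + C 1 by simp,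
      natDegree_X_pow_add_C]
    ring
  refine hmonic.isEisensteinAt_of_mem_of_notMem ?_ ?_ ?_
  · exact Ideal.IsPrime.ne_top <| (Ideal.span_singleton_prime (mod_cast hp.ne_zero)).2 <|
      Nat.prime_iff_prime_int.mp hp
  · intro i hi
    show T.coeff i ∈ Ideal.span {(p:ℤ)}
    rw [Ideal.mem_span_singleton]
    have h2 := congrArg (fun q => Polynomial.coeff q i) hmap
    simp only [coeff_map, Int.coe_castRingHom, coeff_X_pow] at h2
    rw [if_neg hi.ne] at h2
    exact_mod_cast (ZMod.intCast_zmod_eq_zero_iff_dvd _ p).mp h2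
  · have hc0 : T.coeff 0 = p := by
      rw [hT, coeff_zero_eq_eval_zero, eval_comp]
      have : ((X : ℤ[X]) ^ 2 ^ (n-1) + 1).eval 0 = 1 := by
        simp [zero_pow hk.ne']
      rw [this]
      obtain ⟨m', rfl⟩ := Nat.exists_eq_succ_of_ne_zero hm.ne'
      exact_mod_cast eval_one_cyclotomic_prime_pow (R := ℤ) (p := p) m'
    rw [hc0]
    show (p:ℤ) ∉ Ideal.span {(p:ℤ)} ^ 2
    rw [Ideal.span_singleton_pow, Ideal.mem_span_singleton]
    intro h
    have hpne : (p:ℤ) ≠ 0 := mod_cast hp.ne_zero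
    have h' : (p:ℤ) * p ∣ (p:ℤ) * 1 := by rwa [mul_one, ← pow_two]
    have h1 := (mul_dvd_mul_iff_left hpne).mp h'
    exact hp.one_lt.ne' (by exact_mod_cast Int.eq_one_of_dvd_one (by positivity) h1)

theorem index_not_div_p (m n p : ℕ) (hm : 0 < m) (hn : 0 < n) (hp : p.Prime)
    (K : Type*) [Field K] [NumberField K] (θ : NumberField.RingOfIntegers K)
    (hroot : aeval (θ : K) ((cyclotomic (p ^ m) ℚ).comp (cyclotomic (2 ^ n) ℚ)) = 0)
    (hgen : Algebra.adjoin ℚ {(θ : K)} = ⊤) :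
    ¬ p ∣ (Subalgebra.toSubmodule
        (Algebra.adjoin ℤ {θ} : Subalgebra ℤ (NumberField.RingOfIntegers K))).toAddSubgroup.index := by
  haveI : Fact p.Prime := ⟨hp⟩
  have hk : (0:ℕ) < 2 ^ (n-1) := Nat.pow_pos (by norm_num)
  set T : ℤ[X] := (cyclotomic (p ^ m) ℤ).comp (X ^ 2 ^ (n-1) + 1) with hT
  have hXC : (X ^ 2 ^ (n-1) + 1 : ℤ[X]) = X ^ 2 ^ (n-1) + C 1 := by simp
  have hmonic : T.Monic := by
    apply (cyclotomic.monic _ ℤ).comp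
    · rw [hXC]; exact monic_X_pow_add_C 1 hk.ne'
    · rw [hXC, natDegree_X_pow_add_C]; omega
  have hei := T_eisenstein m n p hm hn hp
  have h2n : cyclotomic (2 ^ n) ℚ = X ^ 2 ^ (n-1) + 1 := by
    obtain ⟨n', rfl⟩ := Nat.exists_eq_succ_of_ne_zero hn.ne'
    rw [cyclotomic_prime_pow_eq_geom_sum Nat.prime_two]
    simp [Finset.sum_range_succ, add_comm]
  have hTQ : T.map (algebraMap ℤ ℚ) = (cyclotomic (p ^ m) ℚ).comp (cyclotomic (2 ^ n) ℚ) := by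
    rw [hT, Polynomial.map_comp, map_cyclotomic, h2n]
    simp
  have hdeg : 0 < T.natDegree := by
    rw [hT, natDegree_comp, natDegree_cyclotomic, hXC, natDegree_X_pow_add_C]
    exact mul_pos (Nat.totient_pos.mpr (Nat.pow_pos hp.pos)) hk
  have hPrimeId : (Ideal.span {(p:ℤ)}).IsPrime :=
    (Ideal.span_singleton_prime (mod_cast hp.ne_zero)).2 (Nat.prime_iff_prime_int.mp hp)
  have hirrZ : Irreducible T := hei.irreducible hPrimeId hmonic.isPrimitive hdeg
  have hirrQ : Irreducible (T.map (algebraMap ℤ ℚ)) :=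
    (hmonic.irreducible_iff_irreducible_map_fraction_map).1 hirrZ
  have hint : IsIntegral ℤ (θ : K) := NumberField.RingOfIntegers.isIntegral_coe θ
  have hroot' : aeval (θ : K) (T.map (algebraMap ℤ ℚ)) = 0 := by rw [hTQ]; exact hroot
  have hminQ : minpoly ℚ (θ : K) = T.map (algebraMap ℤ ℚ) :=
    (minpoly.eq_of_irreducible_of_monic hirrQ hroot' (hmonic.map _)).symm
  have hminZ : minpoly ℤ (θ : K) = T := by
    have h1 := minpoly.isIntegrallyClosed_eq_field_fractions' ℚ hint
    rw [hminQ] at h1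
    exact Polynomial.map_injective _ Int.cast_injective h1.symm
  have hintQ : IsIntegral ℚ (θ : K) := IsIntegral.of_finite ℚ _
  let B : PowerBasis ℚ K := (Algebra.adjoin.powerBasis hintQ).map
    ((Subalgebra.equivOfEq _ _ hgen).trans Subalgebra.topEquiv)
  have hBgen : B.gen = (θ : K) := by simp [B]
  have hei' : (minpoly ℤ B.gen).IsEisensteinAt (Submodule.span ℤ {(p:ℤ)}) := by
    rw [hBgen, hminZ]; exact hei
  have key : ∀ z : NumberField.RingOfIntegers K,
      (p:ℤ) • (z : K) ∈ Algebra.adjoin ℤ {(θ : K)} →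
      (z : K) ∈ Algebra.adjoin ℤ {(θ : K)} := by
    intro z hz
    have := mem_adjoin_of_smul_prime_smul_of_minpoly_isEisensteinAt (B := B)
      (Nat.prime_iff_prime_int.mp hp) (hBgen ▸ hint)
      (NumberField.RingOfIntegers.isIntegral_coe z) (by rw [hBgen]; exact hz) hei'
    rwa [hBgen] at this
  -- membership transfer between 𝓞 K and K
  have hinj : Function.Injective (algebraMap (NumberField.RingOfIntegers K) K) :=
    NumberField.RingOfIntegers.coe_injective
  have htrans : ∀ x : NumberField.RingOfIntegers K,
      x ∈ Algebra.adjoin ℤ {θ} ↔ (x : K) ∈ Algebra.adjoin ℤ {(θ : K)} := by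
    intro x
    have hmapadj : Algebra.adjoin ℤ {(θ : K)} =
        (Algebra.adjoin ℤ {θ}).map (IsScalarTower.toAlgHom ℤ (NumberField.RingOfIntegers K) K) := by
      rw [AlgHom.map_adjoin]
      simp
    rw [hmapadj, Subalgebra.mem_map]
    constructor
    · exact fun h => ⟨x, h, rfl⟩
    · rintro ⟨y, hy, hxy⟩
      rwa [hinj hxy] at hy
  set H := (Subalgebra.toSubmodule
      (Algebra.adjoin ℤ {θ} : Subalgebra ℤ (NumberField.RingOfIntegers K))).toAddSubgroup with hH
  set G := NumberField.RingOfIntegers K ⧸ H with hG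
  -- the quotient is a torsion group
  have htor : AddMonoid.IsTorsion G := by
    intro g
    obtain ⟨y, rfl⟩ := QuotientAddGroup.mk'_surjective H g
    have hy : (y : K) ∈ Algebra.adjoin ℚ {(θ : K)} := by rw [hgen]; trivial
    rw [Algebra.adjoin_singleton_eq_range_aeval, AlgHom.mem_range] at hy
    obtain ⟨P, hP⟩ := hy
    obtain ⟨b, hb⟩ := IsLocalization.integerNormalization_map_to_map (nonZeroDivisors ℤ) P
    have hbne : (b : ℤ) ≠ 0 := nonZeroDivisors.coe_ne_zero b
    have hmem : ((b : ℤ) • y : NumberField.RingOfIntegers K) ∈ Algebra.adjoin ℤ {θ} := by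
      rw [htrans]
      have h1 : aeval (θ : K) (IsLocalization.integerNormalization (nonZeroDivisors ℤ) P) =
          (b : ℤ) • (y : K) := by
        have := congrArg (aeval (θ : K)) hb
        rw [aeval_map_algebraMap] at this
        rw [this, ← hP]
        rw [← Int.cast_smul_eq_zsmul ℚ (b : ℤ) P, map_smul, Int.cast_smul_eq_zsmul]
      have h2 : ((((b : ℤ) • y : NumberField.RingOfIntegers K)) : K) = (b : ℤ) • (y : K) := by
        push_cast; ring
      rw [h2, ← h1, Algebra.adjoin_singleton_eq_range_aeval]
      exact ⟨_, rfl⟩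
    refine isOfFinAddOrder_iff_nsmul_eq_zero.2 ⟨(b : ℤ).natAbs, Int.natAbs_pos.2 hbne, ?_⟩
    have : ((b : ℤ).natAbs • y : NumberField.RingOfIntegers K) ∈
        Subalgebra.toSubmodule (Algebra.adjoin ℤ {θ} : Subalgebra ℤ (NumberField.RingOfIntegers K)) := by
      show (b : ℤ).natAbs • y ∈ (Algebra.adjoin ℤ {θ} : Subalgebra ℤ (NumberField.RingOfIntegers K))
      rcases Int.natAbs_eq (b : ℤ) with h | h
      · have : ((b : ℤ).natAbs : ℤ) • y = (b : ℤ) • y := by rw [← h]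
        rw [← natCast_zsmul, this]; exact hmem
      · have : ((b : ℤ).natAbs : ℤ) • y = -((b : ℤ) • y) := by
          rw [show ((b : ℤ).natAbs : ℤ) = -(b : ℤ) by omega, neg_smul]
        rw [← natCast_zsmul, this]
        exact neg_mem hmem
    rw [← map_nsmul (QuotientAddGroup.mk' H)]
    rw [QuotientAddGroup.mk'_apply, QuotientAddGroup.eq_zero_iff]
    exact this
  haveI : AddGroup.FG G := by
    have : AddGroup.FG (NumberField.RingOfIntegers K) :=
      Module.Finite.iff_addGroup_fg.mp inferInstance
    exact AddGroup.fg_of_surjective (QuotientAddGroup.mk'_surjective H)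
  haveI : Finite G := AddCommGroup.finite_of_fg_torsion G htor
  haveI : Fintype G := Fintype.ofFinite G
  intro hdvd
  have hcard : H.index = Fintype.card G := by
    rw [AddSubgroup.index, Nat.card_eq_fintype_card]
  obtain ⟨g, hg⟩ := exists_prime_addOrderOf_dvd_card p (by rw [← hcard]; exact hdvd)
  obtain ⟨y, rfl⟩ := QuotientAddGroup.mk'_surjective H g
  have hpy : p • y ∈ H := by
    rw [← QuotientAddGroup.eq_zero_iff, ← QuotientAddGroup.mk'_apply,
      map_nsmul (QuotientAddGroup.mk' H), ← hg]
    exact addOrderOf_nsmul_eq_zero _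
  have hpy' : (p : ℤ) • (y : K) ∈ Algebra.adjoin ℤ {(θ : K)} := by
    have h2 : (((p • y : NumberField.RingOfIntegers K)) : K) = (p : ℤ) • (y : K) := by
      rw [natCast_zsmul]
      exact map_nsmul (algebraMap (NumberField.RingOfIntegers K) K) _ _
    rw [← h2, ← htrans]
    exact hpy
  have hy : y ∈ Algebra.adjoin ℤ {θ} := (htrans y).2 (key y hpy')
  have h0 : QuotientAddGroup.mk' H y = 0 := by
    rw [QuotientAddGroup.mk'_apply, QuotientAddGroup.eq_zero_iff]
    exact Submodule.mem_toAddSubgroup _ |>.mpr (Subalgebra.mem_toSubmodule _ |>.mpr hy)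
  rw [h0, addOrderOf_zero] at hg
  exact hp.one_lt.ne' hg.symm
end

section
/- The polynomial $\Phi_4(\Phi_{3^n}(x))$ is reducible over $\mathbb{Q}$ for all positive integers $n$. -/
open Polynomial

theorem phi4_comp_phi3pow_reducible (n : ℕ) (hn : 0 < n) :
    ¬ Irreducible ((cyclotomic 4 ℚ).comp (cyclotomic (3 ^ n) ℚ)) := by
  obtain ⟨k, rfl⟩ : ∃ k, n = k + 1 := ⟨n - 1, (Nat.succ_pred_eq_of_pos hn).symm⟩
  set m := 3 ^ k with hm
  have hm0 : m ≠ 0 := pow_ne_zero _ (by norm_num)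
  have h4 : cyclotomic 4 ℚ = X ^ 2 + 1 := by
    have := cyclotomic_prime_pow_eq_geom_sum (R := ℚ) (p := 2) (n := 1) Nat.prime_two
    norm_num [Finset.sum_range_succ] at this
    rw [this]; ring
  have h3 : cyclotomic (3 ^ (k + 1)) ℚ = X ^ (2 * m) + X ^ m + 1 := by
    have := cyclotomic_prime_pow_eq_geom_sum (R := ℚ) (p := 3) (n := k) Nat.prime_three
    rw [this]
    simp [Finset.sum_range_succ, ← pow_mul, hm]
    ring
  have key : (cyclotomic 4 ℚ).comp (cyclotomic (3 ^ (k + 1)) ℚ) =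
      (X ^ (2 * m) + 1) * (X ^ (2 * m) + C 2 * X ^ m + C 2) := by
    rw [h4, h3]
    simp only [add_comp, pow_comp, X_comp, one_comp, map_ofNat]
    ring
  intro hirr
  rcases hirr.isUnit_or_isUnit key with h | h
  · have := natDegree_eq_zero_of_isUnit h
    have h2 : (X ^ (2 * m) + 1 : ℚ[X]).natDegree = 2 * m := by
      compute_degree! <;> first | omega | (split_ifs <;> simp_all)
    omega
  · have := natDegree_eq_zero_of_isUnit h
    have h2 : (X ^ (2 * m) + C 2 * X ^ m + C 2 : ℚ[X]).natDegree = 2 * m := by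
      compute_degree! <;> first | omega | (split_ifs <;> simp_all)
    omega
end
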